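/- Let w(τ,x) = e^{rτ}(1 − e^x)⁺·K − K N(−d₂(τ,x)) + K e^{rτ+x} N(−d₁(τ,x)) where d₁ = (x+(r+σ²/2)τ)/(σ√τ), d₂ = d₁ − σ√τ. Then for p ≥ 1 there is a constant C₀ > 0 depending only on p, σ, r, T, K such that ‖e^{x⁻} ∂_τ w(τ,·)‖_{L^p(ℝ, dx)} ≤ C₀ τ^{1/(2p) − 1/2} for all 0 < τ ≤ T, where x⁻ = min(x,0). -/

import Mathlib

open MeasureTheory Real

/-- Standard normal cumulative distribution function. -/
noncomputable def stdNormalCDF (d : ℝ) : ℝ :=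
  ∫ ξ in Set.Iio d, Real.exp (-ξ ^ 2 / 2) / Real.sqrt (2 * Real.pi)

/-- Black–Scholes argument `d₁(τ,x) = (x + (r + σ²/2)τ)/(σ√τ)`. -/
noncomputable def dOne (σ r τ x : ℝ) : ℝ :=
  (x + (r + σ ^ 2 / 2) * τ) / (σ * Real.sqrt τ)

/-- `d₂ = d₁ − σ√τ`. -/
noncomputable def dTwo (σ r τ x : ℝ) : ℝ :=
  dOne σ r τ x - σ * Real.sqrt τ

/-- `w(τ,x) = e^{rτ} K (1 − e^x)⁺ − K N(−d₂) + K e^{rτ+x} N(−d₁)`. -/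
noncomputable def wPut (σ r K τ x : ℝ) : ℝ :=
  Real.exp (r * τ) * max (1 - Real.exp x) 0 * K -
    K * stdNormalCDF (-(dTwo σ r τ x)) +
    K * Real.exp (r * τ + x) * stdNormalCDF (-(dOne σ r τ x))

lemma gauss_eq (ξ : ℝ) : Real.exp (-ξ ^ 2 / 2) = Real.exp (-(1/2) * ξ ^ 2) := by
  ring_nf

lemma integrable_gauss : Integrable (fun ξ : ℝ => Real.exp (-ξ ^ 2 / 2) / Real.sqrt (2 * Real.pi)) := by
  have h := (integrable_exp_neg_mul_sq (by norm_num : (0:ℝ) < 1/2)).div_const (Real.sqrt (2 * Real.pi))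
  simpa [gauss_eq] using h

lemma integral_gauss : ∫ ξ : ℝ, Real.exp (-ξ ^ 2 / 2) / Real.sqrt (2 * Real.pi) = 1 := by
  have h : ∫ ξ : ℝ, Real.exp (-(1/2) * ξ ^ 2) = Real.sqrt (π / (1/2)) := integral_gaussian (1/2)
  have h2 : ∫ ξ : ℝ, Real.exp (-ξ ^ 2 / 2) / Real.sqrt (2 * Real.pi)
      = (∫ ξ : ℝ, Real.exp (-(1/2) * ξ ^ 2)) / Real.sqrt (2 * Real.pi) := by
    rw [integral_div]; congr 1; exact integral_congr_ae (Filter.Eventually.of_forall fun ξ => by simp only []; rw [gauss_eq])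
  rw [h2, h]
  rw [div_eq_one_iff_eq (by positivity)]
  congr 1
  ring

lemma stdNormalCDF_nonneg (d : ℝ) : 0 ≤ stdNormalCDF d := by
  apply integral_nonneg
  intro ξ; positivity

lemma stdNormalCDF_le_one (d : ℝ) : stdNormalCDF d ≤ 1 := by
  rw [← integral_gauss]
  exact setIntegral_le_integral integrable_gauss
    (Filter.Eventually.of_forall fun ξ => by positivity)

lemma stdNormalCDF_neg_le {d : ℝ} (hd : 0 ≤ d) : stdNormalCDF (-d) ≤ Real.exp (-d ^ 2 / 2) := by
  set g : ℝ → ℝ := fun ξ => Real.exp (-ξ ^ 2 / 2) / Real.sqrt (2 * Real.pi) with hg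
  have hint : Integrable g := integrable_gauss
  have hint2 : Integrable (fun ξ => Real.exp (-d ^ 2 / 2) * g (ξ + d)) :=
    (hint.comp_add_right d).const_mul _
  have h1 : stdNormalCDF (-d) ≤ ∫ ξ in Set.Iio (-d), Real.exp (-d ^ 2 / 2) * g (ξ + d) := by
    apply setIntegral_mono_on hint.integrableOn hint2.integrableOn measurableSet_Iio
    intro ξ hξ
    simp only [Set.mem_Iio] at hξ
    rw [hg]
    simp only []
    rw [← mul_div_assoc]
    apply div_le_div_of_nonneg_right _ (by positivity)
    · rw [← Real.exp_add]
      apply Real.exp_le_exp.2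
      nlinarith [mul_nonneg hd (by linarith : (0:ℝ) ≤ -(ξ + d))]
  have h2 : ∫ ξ in Set.Iio (-d), Real.exp (-d ^ 2 / 2) * g (ξ + d)
      ≤ ∫ ξ : ℝ, Real.exp (-d ^ 2 / 2) * g (ξ + d) :=
    setIntegral_le_integral hint2 (Filter.Eventually.of_forall fun ξ => by positivity)
  have h3 : ∫ ξ : ℝ, Real.exp (-d ^ 2 / 2) * g (ξ + d) = Real.exp (-d ^ 2 / 2) := by
    rw [integral_const_mul]
    have : (∫ ξ : ℝ, g (ξ + d)) = ∫ ξ : ℝ, g ξ := integral_add_right_eq_self g d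
    rw [this, hg, integral_gauss, mul_one]
  calc stdNormalCDF (-d) ≤ _ := h1
    _ ≤ _ := h2
    _ = _ := h3

lemma stdNormalCDF_hasDerivAt (y : ℝ) :
    HasDerivAt stdNormalCDF (Real.exp (-y ^ 2 / 2) / Real.sqrt (2 * Real.pi)) y := by
  set g : ℝ → ℝ := fun ξ => Real.exp (-ξ ^ 2 / 2) / Real.sqrt (2 * Real.pi) with hg
  have hcont : Continuous g := by fun_prop
  have hkey : ∀ z : ℝ, stdNormalCDF z = (∫ ξ in Set.Iic (0:ℝ), g ξ) + ∫ ξ in (0:ℝ)..z, g ξ := by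
    intro z
    have h1 : stdNormalCDF z = ∫ ξ in Set.Iic z, g ξ := (integral_Iic_eq_integral_Iio).symm
    rw [h1, ← intervalIntegral.integral_Iic_sub_Iic integrable_gauss.integrableOn
      integrable_gauss.integrableOn]
    ring
  have hD : HasDerivAt (fun z => (∫ ξ in Set.Iic (0:ℝ), g ξ) + ∫ ξ in (0:ℝ)..z, g ξ) (g y) y := by
    apply HasDerivAt.const_add
    exact intervalIntegral.integral_hasDerivAt_right integrable_gauss.intervalIntegrable
      hcont.aestronglyMeasurable.stronglyMeasurableAtFilter hcont.continuousAt
  exact hD.congr_of_eventuallyEq (Filter.Eventually.of_forall fun z => hkey z)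

lemma wPut_hasDerivAt (σ r K x τ : ℝ) (hσ : 0 < σ) (hτ : 0 < τ) :
    HasDerivAt (fun t => wPut σ r K t x)
      (r * K * Real.exp (r * τ) * max (1 - Real.exp x) 0
        + r * K * Real.exp (r * τ + x) * stdNormalCDF (-(dOne σ r τ x))
        - K * σ / (2 * Real.sqrt τ) *
          (Real.exp (-(dTwo σ r τ x) ^ 2 / 2) / Real.sqrt (2 * Real.pi))) τ := by
  have hs : 0 < Real.sqrt τ := Real.sqrt_pos.2 hτ
  set s := Real.sqrt τ with hsdef
  have hs2 : s ^ 2 = τ := Real.sq_sqrt hτ.le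
  have hden : σ * s ≠ 0 := by positivity
  set a := r + σ ^ 2 / 2 with hadef
  -- derivative of t ↦ σ * √t
  have hsq : HasDerivAt (fun t : ℝ => σ * Real.sqrt t) (σ * (1 / (2 * s))) τ :=
    (Real.hasDerivAt_sqrt hτ.ne').const_mul σ
  have hnum : HasDerivAt (fun t : ℝ => x + a * t) a τ := by
    simpa using ((hasDerivAt_id τ).const_mul a).const_add x
  set D1 := (a * (σ * s) - (x + a * τ) * (σ * (1 / (2 * s)))) / (σ * s) ^ 2 with hD1def
  have hd1 : HasDerivAt (fun t => dOne σ r t x) D1 τ := by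
    simp only [dOne]
    exact hnum.div hsq hden
  have hd2 : HasDerivAt (fun t => dTwo σ r t x) (D1 - σ * (1 / (2 * s))) τ := by
    simp only [dTwo]
    exact hd1.sub ((Real.hasDerivAt_sqrt hτ.ne').const_mul σ)
  set E1 := Real.exp (-(dOne σ r τ x) ^ 2 / 2) / Real.sqrt (2 * Real.pi) with hE1def
  set E2 := Real.exp (-(dTwo σ r τ x) ^ 2 / 2) / Real.sqrt (2 * Real.pi) with hE2def
  have hN1 : HasDerivAt (fun t => stdNormalCDF (-(dOne σ r t x))) (E1 * -D1) τ := by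
    have h := (stdNormalCDF_hasDerivAt (-(dOne σ r τ x))).comp τ hd1.neg
    simp only [neg_sq] at h
    exact h
  have hN2 : HasDerivAt (fun t => stdNormalCDF (-(dTwo σ r t x)))
      (E2 * -(D1 - σ * (1 / (2 * s)))) τ := by
    have h := (stdNormalCDF_hasDerivAt (-(dTwo σ r τ x))).comp τ hd2.neg
    simp only [neg_sq] at h
    exact h
  have h1 : HasDerivAt (fun t => Real.exp (r * t) * max (1 - Real.exp x) 0 * K)
      (r * Real.exp (r * τ) * max (1 - Real.exp x) 0 * K) τ := by
    have he : HasDerivAt (fun t : ℝ => Real.exp (r * t)) (r * Real.exp (r * τ)) τ := by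
      simpa [mul_comm] using (((hasDerivAt_id τ).const_mul r).exp)
    exact (he.mul_const _).mul_const _
  have h2 : HasDerivAt (fun t => K * stdNormalCDF (-(dTwo σ r t x)))
      (K * (E2 * -(D1 - σ * (1 / (2 * s))))) τ := hN2.const_mul K
  have h3 : HasDerivAt (fun t => K * Real.exp (r * t + x) * stdNormalCDF (-(dOne σ r t x)))
      ((K * (r * Real.exp (r * τ + x))) * stdNormalCDF (-(dOne σ r τ x))
        + (K * Real.exp (r * τ + x)) * (E1 * -D1)) τ := by
    have he : HasDerivAt (fun t : ℝ => K * Real.exp (r * t + x)) (K * (r * Real.exp (r * τ + x))) τ := by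
      have : HasDerivAt (fun t : ℝ => r * t + x) r τ := by
        simpa using ((hasDerivAt_id τ).const_mul r).add_const x
      exact (this.exp.const_mul K).congr_deriv (by ring)
    exact he.mul hN1
  have H := (h1.sub h2).add h3
  have hwp : (fun t => wPut σ r K t x) = fun t =>
      Real.exp (r * t) * max (1 - Real.exp x) 0 * K - K * stdNormalCDF (-(dTwo σ r t x))
        + K * Real.exp (r * t + x) * stdNormalCDF (-(dOne σ r t x)) := by
    funext t; rw [wPut]
  rw [hwp]
  refine H.congr_deriv ?_
  -- value identity
  have hd1v : dOne σ r τ x * (σ * s) = x + a * τ := by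
    rw [dOne, hadef]; field_simp; rw [← hsdef]
  have hkey : Real.exp (r * τ + x) * Real.exp (-(dOne σ r τ x) ^ 2 / 2)
      = Real.exp (-(dTwo σ r τ x) ^ 2 / 2) := by
    rw [← Real.exp_add]
    congr 1
    rw [dTwo, ← hsdef]
    rw [hadef] at hd1v
    linear_combination -hd1v + σ ^ 2 / 2 * hs2
  have hkey2 : Real.exp (r * τ + x) * E1 = E2 := by
    rw [hE1def, hE2def, ← mul_div_assoc, hkey]
  rw [hE2def] at hkey2 ⊢
  rw [← hkey2]
  field_simp
  ring

lemma pointwise_bound (σ r K T : ℝ) (τ x : ℝ) (hτ : 0 < τ) (hτT : τ ≤ T)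
    (hσ : 0 < σ) (hr : 0 ≤ r) (hK : 0 < K) (hT : 0 < T) :
    |Real.exp (min x 0) *
      (r * K * Real.exp (r * τ) * max (1 - Real.exp x) 0
        + r * K * Real.exp (r * τ + x) * stdNormalCDF (-(dOne σ r τ x))
        - K * σ / (2 * Real.sqrt τ) *
          (Real.exp (-(dTwo σ r τ x) ^ 2 / 2) / Real.sqrt (2 * Real.pi)))| ≤
      (2 * (r * K * Real.exp (r * T))) * Real.exp (x - (max x 0) ^ 2 / (2 * σ ^ 2 * T))
        + K * σ / (2 * Real.sqrt τ) *
          (Real.exp (-(dTwo σ r τ x) ^ 2 / 2) / Real.sqrt (2 * Real.pi)) := by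
  set A := r * K * Real.exp (r * τ) * max (1 - Real.exp x) 0 with hA
  set B := r * K * Real.exp (r * τ + x) * stdNormalCDF (-(dOne σ r τ x)) with hB
  set C := K * σ / (2 * Real.sqrt τ) *
      (Real.exp (-(dTwo σ r τ x) ^ 2 / 2) / Real.sqrt (2 * Real.pi)) with hC
  have hA0 : 0 ≤ A := by
    apply mul_nonneg (by positivity)
    exact le_max_right _ _
  have hB0 : 0 ≤ B := mul_nonneg (by positivity) (stdNormalCDF_nonneg _)
  have hC0 : 0 ≤ C := by
    have hs : 0 < Real.sqrt τ := Real.sqrt_pos.2 hτ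
    rw [hC]; positivity
  have hm : Real.exp (min x 0) ≤ 1 := Real.exp_le_one_iff.2 (min_le_right x 0)
  have hm0 : 0 < Real.exp (min x 0) := Real.exp_pos _
  have habs : |Real.exp (min x 0) * (A + B - C)| ≤
      Real.exp (min x 0) * A + Real.exp (min x 0) * B + C := by
    rw [abs_mul, abs_of_pos hm0]
    have : |A + B - C| ≤ A + B + C := abs_le.2 ⟨by linarith, by linarith⟩
    calc Real.exp (min x 0) * |A + B - C| ≤ Real.exp (min x 0) * (A + B + C) := by
          exact mul_le_mul_of_nonneg_left this hm0.le
      _ = Real.exp (min x 0) * A + Real.exp (min x 0) * B + Real.exp (min x 0) * C := by ring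
      _ ≤ _ := by nlinarith
  set c₁ := r * K * Real.exp (r * T) with hc₁
  have hc₁0 : 0 ≤ c₁ := by positivity
  have herτ : Real.exp (r * τ) ≤ Real.exp (r * T) :=
    Real.exp_le_exp.2 (mul_le_mul_of_nonneg_left hτT hr)
  set m₂ := Real.exp (x - (max x 0) ^ 2 / (2 * σ ^ 2 * T)) with hm₂
  -- bound 1 : e^{min} A ≤ c₁ m₂
  have hbd1 : Real.exp (min x 0) * A ≤ c₁ * m₂ := by
    rcases le_or_gt x 0 with hx | hx
    · have hmax : max x 0 = 0 := max_eq_right hx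
      have hmin : min x 0 = x := min_eq_left hx
      have hP : max (1 - Real.exp x) 0 ≤ 1 := by
        apply max_le _ zero_le_one
        nlinarith [Real.exp_pos x]
      rw [hA, hmin, hm₂, hmax]
      have : Real.exp x * (r * K * Real.exp (r * τ) * max (1 - Real.exp x) 0)
          ≤ Real.exp x * (r * K * Real.exp (r * T) * 1) := by
        apply mul_le_mul_of_nonneg_left _ (Real.exp_pos x).le
        apply mul_le_mul _ hP (le_max_right _ _) (by positivity)
        exact mul_le_mul_of_nonneg_left herτ (by positivity)
      calc Real.exp x * A ≤ Real.exp x * (r * K * Real.exp (r * T) * 1) := this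
        _ = c₁ * Real.exp (x - 0 ^ 2 / (2 * σ ^ 2 * T)) := by
            rw [hc₁]; ring_nf
    · have hP : max (1 - Real.exp x) 0 = 0 := by
        apply max_eq_right
        nlinarith [Real.one_le_exp hx.le]
      rw [hA, hP, mul_zero, mul_zero]
      positivity
  -- bound 2 : e^{min} B ≤ c₁ m₂
  have hbd2 : Real.exp (min x 0) * B ≤ c₁ * m₂ := by
    have hrτx : Real.exp (r * τ + x) = Real.exp (r * τ) * Real.exp x := Real.exp_add _ _
    rcases le_or_gt x 0 with hx | hx
    · have hmax : max x 0 = 0 := max_eq_right hx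
      have hmin : min x 0 = x := min_eq_left hx
      have hN : stdNormalCDF (-(dOne σ r τ x)) ≤ 1 := stdNormalCDF_le_one _
      rw [hB, hmin, hm₂, hmax]
      have h2x : Real.exp x * Real.exp x ≤ Real.exp x := by
        rw [← Real.exp_add]
        exact Real.exp_le_exp.2 (by linarith)
      calc Real.exp x * (r * K * Real.exp (r * τ + x) * stdNormalCDF (-(dOne σ r τ x)))
          ≤ Real.exp x * (r * K * Real.exp (r * τ + x) * 1) := by
            apply mul_le_mul_of_nonneg_left _ (Real.exp_pos x).le
            exact mul_le_mul_of_nonneg_left hN (by positivity)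
        _ = r * K * Real.exp (r * τ) * (Real.exp x * Real.exp x) := by
            rw [hrτx]; ring
        _ ≤ r * K * Real.exp (r * T) * Real.exp x := by
            have := mul_le_mul (mul_le_mul_of_nonneg_left herτ
              (by positivity : (0:ℝ) ≤ r * K)) h2x (by positivity) (by positivity)
            exact this
        _ = c₁ * Real.exp (x - 0 ^ 2 / (2 * σ ^ 2 * T)) := by rw [hc₁]; ring_nf
    · -- x > 0 : Chernoff
      have hmin : min x 0 = 0 := min_eq_right hx.le
      have hmax : max x 0 = x := max_eq_left hx.le
      have hsτ : 0 < Real.sqrt τ := Real.sqrt_pos.2 hτ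
      have hsT : 0 < Real.sqrt T := Real.sqrt_pos.2 hT
      have hd1pos : 0 ≤ dOne σ r τ x := by
        rw [dOne]
        positivity
      have hd1ge : x / (σ * Real.sqrt T) ≤ dOne σ r τ x := by
        rw [dOne]
        have h1 : x / (σ * Real.sqrt T) ≤ x / (σ * Real.sqrt τ) := by
          apply div_le_div_of_nonneg_left hx.le (by positivity)
          exact mul_le_mul_of_nonneg_left (Real.sqrt_le_sqrt hτT) hσ.le
        have h2 : x / (σ * Real.sqrt τ) ≤ (x + (r + σ ^ 2 / 2) * τ) / (σ * Real.sqrt τ) := by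
          apply div_le_div_of_nonneg_right _ (by positivity)
          nlinarith
        linarith
      have hchern : stdNormalCDF (-(dOne σ r τ x)) ≤ Real.exp (-(dOne σ r τ x) ^ 2 / 2) :=
        stdNormalCDF_neg_le hd1pos
      have hsq : x ^ 2 / (2 * σ ^ 2 * T) ≤ dOne σ r τ x ^ 2 / 2 := by
        have h1 : (x / (σ * Real.sqrt T)) ^ 2 ≤ dOne σ r τ x ^ 2 := by
          apply sq_le_sq' _ hd1ge
          have : 0 ≤ x / (σ * Real.sqrt T) := by positivity
          linarith
        have h2 : (x / (σ * Real.sqrt T)) ^ 2 = x ^ 2 / (σ ^ 2 * T) := by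
          rw [div_pow, mul_pow, Real.sq_sqrt hT.le]
        rw [h2] at h1
        calc x ^ 2 / (2 * σ ^ 2 * T) = x ^ 2 / (σ ^ 2 * T) / 2 := by ring
          _ ≤ dOne σ r τ x ^ 2 / 2 := by linarith
      have hexp2 : Real.exp (-(dOne σ r τ x) ^ 2 / 2) ≤ Real.exp (-(x ^ 2 / (2 * σ ^ 2 * T))) := by
        apply Real.exp_le_exp.2
        linarith
      rw [hB, hmin, hm₂, hmax, Real.exp_zero, one_mul]
      have hNbd : stdNormalCDF (-(dOne σ r τ x)) ≤ Real.exp (-(x ^ 2 / (2 * σ ^ 2 * T))) := by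
        calc stdNormalCDF (-(dOne σ r τ x)) ≤ Real.exp (-(dOne σ r τ x) ^ 2 / 2) := hchern
          _ ≤ _ := hexp2
      calc r * K * Real.exp (r * τ + x) * stdNormalCDF (-(dOne σ r τ x))
          ≤ r * K * Real.exp (r * τ + x) * Real.exp (-(x ^ 2 / (2 * σ ^ 2 * T))) := by
            exact mul_le_mul_of_nonneg_left hNbd (by positivity)
        _ = r * K * Real.exp (r * τ) * Real.exp (x - x ^ 2 / (2 * σ ^ 2 * T)) := by
            have hE : Real.exp (r * τ + x) * Real.exp (-(x ^ 2 / (2 * σ ^ 2 * T)))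
                = Real.exp (r * τ) * Real.exp (x - x ^ 2 / (2 * σ ^ 2 * T)) := by
              rw [← Real.exp_add, ← Real.exp_add]
              congr 1
              ring
            rw [mul_assoc, hE, ← mul_assoc]
        _ ≤ c₁ * Real.exp (x - x ^ 2 / (2 * σ ^ 2 * T)) := by
            rw [hc₁]
            apply mul_le_mul_of_nonneg_right _ (Real.exp_pos _).le
            exact mul_le_mul_of_nonneg_left herτ (by positivity)
  calc |Real.exp (min x 0) * (A + B - C)| ≤
      Real.exp (min x 0) * A + Real.exp (min x 0) * B + C := habs
    _ ≤ c₁ * m₂ + c₁ * m₂ + C := by linarith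
    _ = (2 * c₁) * m₂ + C := by ring


lemma integrable_m2p (σ p T : ℝ) (hσ : 0 < σ) (hp : 1 ≤ p) (hT : 0 < T) :
    Integrable (fun x : ℝ => Real.exp (p * (x - (max x 0) ^ 2 / (2 * σ ^ 2 * T)))) := by
  set c : ℝ := 2 * σ ^ 2 * T with hc
  have hc0 : 0 < c := by positivity
  have hp0 : 0 < p := lt_of_lt_of_le one_pos hp
  set f : ℝ → ℝ := fun x => Real.exp (p * (x - (max x 0) ^ 2 / c)) with hf
  have h1 : IntegrableOn f (Set.Iic 0) := by
    have hbase : IntegrableOn (fun x : ℝ => Real.exp (p * x)) (Set.Iic 0) := by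
      apply Integrable.mono (integrableOn_exp_Iic 0)
      · exact (Real.continuous_exp.comp (continuous_const.mul continuous_id)).aestronglyMeasurable
      · refine (ae_restrict_iff' measurableSet_Iic).2 (Filter.Eventually.of_forall fun x hx => ?_)
        simp only [Set.mem_Iic] at hx
        rw [Real.norm_eq_abs, Real.norm_eq_abs, abs_of_pos (Real.exp_pos _),
          abs_of_pos (Real.exp_pos _)]
        apply Real.exp_le_exp.2
        nlinarith
    apply hbase.congr_fun _ measurableSet_Iic
    intro x hx
    simp only [Set.mem_Iic] at hx
    rw [hf]
    simp only [max_eq_right hx]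
    norm_num
  have h2 : IntegrableOn f (Set.Ioi 0) := by
    set b : ℝ := p / c with hb
    have hb0 : 0 < b := by positivity
    set d : ℝ := p / (2 * b) with hd
    have hglob : Integrable (fun x : ℝ => Real.exp (b * d ^ 2) * Real.exp (-b * (x - d) ^ 2)) :=
      ((integrable_exp_neg_mul_sq hb0).comp_sub_right d).const_mul _
    have hglob2 : Integrable (fun x : ℝ => Real.exp (p * x - b * x ^ 2)) := by
      apply hglob.congr
      refine Filter.Eventually.of_forall fun x => ?_
      show Real.exp (b * d ^ 2) * Real.exp (-b * (x - d) ^ 2) = Real.exp (p * x - b * x ^ 2)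
      rw [← Real.exp_add]
      congr 1
      rw [hd]
      field_simp
      ring
    apply hglob2.integrableOn.congr_fun _ measurableSet_Ioi
    intro x hx
    simp only [Set.mem_Ioi] at hx
    rw [hf]
    simp only [max_eq_left hx.le]
    congr 1
    rw [hb]
    field_simp
  have := h1.union h2
  rw [Set.Iic_union_Ioi] at this
  exact integrableOn_univ.1 this

lemma dTwo_eq (σ r τ x : ℝ) (hσ : 0 < σ) (hτ : 0 < τ) :
    dTwo σ r τ x = (x + (r - σ ^ 2 / 2) * τ) / (σ * Real.sqrt τ) := by
  have hs : 0 < Real.sqrt τ := Real.sqrt_pos.2 hτ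
  have hs2 : Real.sqrt τ * Real.sqrt τ = τ := Real.mul_self_sqrt hτ.le
  rw [dTwo, dOne]
  field_simp
  nlinarith [hs2]

lemma exp_dTwo_sq_eq (σ r p τ : ℝ) (hσ : 0 < σ) (hτ : 0 < τ) (hp0 : 0 < p) (x : ℝ) :
    -(dTwo σ r τ x) ^ 2 / 2 * p = -(p / (2 * σ ^ 2 * τ)) * (x + (r - σ ^ 2 / 2) * τ) ^ 2 := by
  have hs : 0 < Real.sqrt τ := Real.sqrt_pos.2 hτ
  rw [dTwo_eq σ r τ x hσ hτ, div_pow, mul_pow, Real.sq_sqrt hτ.le]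
  field_simp

lemma integrable_exp_dTwo (σ r p τ : ℝ) (hσ : 0 < σ) (hτ : 0 < τ) (hp0 : 0 < p) :
    Integrable (fun x : ℝ => Real.exp (-(dTwo σ r τ x) ^ 2 / 2 * p)) := by
  have hb0 : 0 < p / (2 * σ ^ 2 * τ) := by positivity
  have h := (integrable_exp_neg_mul_sq hb0).comp_add_right ((r - σ ^ 2 / 2) * τ)
  apply h.congr
  refine Filter.Eventually.of_forall fun x => ?_
  show Real.exp (-(p / (2 * σ ^ 2 * τ)) * (x + (r - σ ^ 2 / 2) * τ) ^ 2)
      = Real.exp (-(dTwo σ r τ x) ^ 2 / 2 * p)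
  rw [exp_dTwo_sq_eq σ r p τ hσ hτ hp0 x]

lemma integral_exp_dTwo (σ r p τ : ℝ) (hσ : 0 < σ) (hτ : 0 < τ) (hp0 : 0 < p) :
    ∫ x : ℝ, Real.exp (-(dTwo σ r τ x) ^ 2 / 2 * p)
      = Real.sqrt (2 * σ ^ 2 * Real.pi / p) * Real.sqrt τ := by
  have hb0 : 0 < p / (2 * σ ^ 2 * τ) := by positivity
  set b : ℝ := p / (2 * σ ^ 2 * τ) with hb
  set sh : ℝ := (r - σ ^ 2 / 2) * τ with hsh
  have h1 : ∫ x : ℝ, Real.exp (-(dTwo σ r τ x) ^ 2 / 2 * p)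
      = ∫ x : ℝ, Real.exp (-b * (x + sh) ^ 2) := by
    congr 1
    funext x
    rw [exp_dTwo_sq_eq σ r p τ hσ hτ hp0 x]
  have h2 : ∫ x : ℝ, Real.exp (-b * (x + sh) ^ 2) = ∫ x : ℝ, Real.exp (-b * x ^ 2) :=
    integral_add_right_eq_self (fun x => Real.exp (-b * x ^ 2)) sh
  rw [h1, h2, integral_gaussian]
  rw [show π / b = 2 * σ ^ 2 * Real.pi / p * τ by rw [hb]; field_simp]
  exact Real.sqrt_mul (by positivity) τ

lemma add_rpow_le (p a b : ℝ) (hp : 1 ≤ p) (ha : 0 ≤ a) (hb : 0 ≤ b) :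
    (a + b) ^ p ≤ 2 ^ p * (a ^ p + b ^ p) := by
  have hp0 : (0:ℝ) ≤ p := by linarith
  have h1 : a + b ≤ 2 * max a b := by
    rcases max_choice a b with h | h <;> rw [h] <;>
      [nlinarith [le_max_right a b, le_max_left a b];
       nlinarith [le_max_left a b, le_max_right a b]]
  have h2 : (a + b) ^ p ≤ (2 * max a b) ^ p :=
    Real.rpow_le_rpow (by linarith) h1 hp0
  have h3 : (2 * max a b) ^ p = 2 ^ p * (max a b) ^ p :=
    Real.mul_rpow (by norm_num) (le_max_of_le_left ha)
  have h4 : (max a b) ^ p ≤ a ^ p + b ^ p := by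
    rcases max_choice a b with h | h <;> rw [h]
    · nlinarith [Real.rpow_nonneg hb p]
    · nlinarith [Real.rpow_nonneg ha p]
  calc (a + b) ^ p ≤ (2 * max a b) ^ p := h2
    _ = 2 ^ p * (max a b) ^ p := h3
    _ ≤ 2 ^ p * (a ^ p + b ^ p) := by
        apply mul_le_mul_of_nonneg_left h4 (Real.rpow_nonneg (by norm_num) p)

/-- `‖e^{x⁻} ∂_τ w(τ,·)‖_{L^p} ≤ C₀ τ^{1/(2p)−1/2}` for `0 < τ ≤ T`. -/
theorem put_obstacle_time_derivative_Lp_bound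
    (σ r K p T : ℝ) (hσ : 0 < σ) (hr : 0 ≤ r) (hK : 0 < K)
    (hp : 1 ≤ p) (hT : 0 < T) :
    ∃ C₀ : ℝ, 0 < C₀ ∧ ∀ τ : ℝ, 0 < τ → τ ≤ T →
      (∫ x : ℝ, |Real.exp (min x 0) * deriv (fun t => wPut σ r K t x) τ| ^ p) ^ (1 / p) ≤
        C₀ * τ ^ (1 / (2 * p) - 1 / 2) := by
  have hp0 : (0:ℝ) < p := lt_of_lt_of_le one_pos hp
  set E : ℝ := 1 / 2 - p / 2 with hE
  have hE0 : E ≤ 0 := by rw [hE]; linarith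
  set c₂ : ℝ := 2 * (r * K * Real.exp (r * T)) with hc₂
  have hc₂0 : 0 ≤ c₂ := by positivity
  set Bint : ℝ := ∫ x : ℝ, Real.exp (p * (x - (max x 0) ^ 2 / (2 * σ ^ 2 * T))) with hBint
  have hBint0 : 0 ≤ Bint := integral_nonneg fun x => (Real.exp_pos _).le
  set C₂ : ℝ := (K * σ / 2) ^ p * Real.sqrt (2 * σ ^ 2 * Real.pi / p)
      / Real.sqrt (2 * Real.pi) ^ p with hC₂
  have hC₂0 : 0 ≤ C₂ := by positivity
  set Ct : ℝ := 2 ^ p * c₂ ^ p * Bint * T ^ (-E) + 2 ^ p * C₂ with hCt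
  have hCt0 : 0 ≤ Ct := by positivity
  refine ⟨Ct ^ (1/p) + 1, by positivity, fun τ hτ hτT => ?_⟩
  have hsτ : 0 < Real.sqrt τ := Real.sqrt_pos.2 hτ
  set cg : ℝ := K * σ / (2 * Real.sqrt τ) with hcg
  have hcg0 : 0 ≤ cg := by positivity
  -- the majorant
  set M : ℝ → ℝ := fun x => 2 ^ p * (c₂ ^ p * Real.exp (p * (x - (max x 0) ^ 2 / (2 * σ ^ 2 * T)))
      + cg ^ p * (Real.exp (-(dTwo σ r τ x) ^ 2 / 2 * p) / Real.sqrt (2 * Real.pi) ^ p)) with hM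
  have hMint1 : Integrable (fun x : ℝ =>
      c₂ ^ p * Real.exp (p * (x - (max x 0) ^ 2 / (2 * σ ^ 2 * T)))) :=
    (integrable_m2p σ p T hσ hp hT).const_mul _
  have hMint2 : Integrable (fun x : ℝ =>
      cg ^ p * (Real.exp (-(dTwo σ r τ x) ^ 2 / 2 * p) / Real.sqrt (2 * Real.pi) ^ p)) :=
    (((integrable_exp_dTwo σ r p τ hσ hτ hp0).div_const _).const_mul _)
  have hMint : Integrable M := ((hMint1.add hMint2).const_mul _)
  -- pointwise bound
  have hpoint : ∀ x : ℝ,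
      |Real.exp (min x 0) * deriv (fun t => wPut σ r K t x) τ| ^ p ≤ M x := by
    intro x
    rw [(wPut_hasDerivAt σ r K x τ hσ hτ).deriv]
    set a : ℝ := c₂ * Real.exp (x - (max x 0) ^ 2 / (2 * σ ^ 2 * T)) with ha
    set bb : ℝ := cg * (Real.exp (-(dTwo σ r τ x) ^ 2 / 2) / Real.sqrt (2 * Real.pi)) with hbb
    have ha0 : 0 ≤ a := by positivity
    have hbb0 : 0 ≤ bb := by positivity
    have h1 : |Real.exp (min x 0) *
        (r * K * Real.exp (r * τ) * max (1 - Real.exp x) 0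
          + r * K * Real.exp (r * τ + x) * stdNormalCDF (-(dOne σ r τ x))
          - K * σ / (2 * Real.sqrt τ) *
            (Real.exp (-(dTwo σ r τ x) ^ 2 / 2) / Real.sqrt (2 * Real.pi)))| ≤ a + bb :=
      pointwise_bound σ r K T τ x hτ hτT hσ hr hK hT
    have h2 : |Real.exp (min x 0) *
        (r * K * Real.exp (r * τ) * max (1 - Real.exp x) 0
          + r * K * Real.exp (r * τ + x) * stdNormalCDF (-(dOne σ r τ x))
          - K * σ / (2 * Real.sqrt τ) *
            (Real.exp (-(dTwo σ r τ x) ^ 2 / 2) / Real.sqrt (2 * Real.pi)))| ^ p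
        ≤ (a + bb) ^ p :=
      Real.rpow_le_rpow (abs_nonneg _) h1 hp0.le
    have h3 : (a + bb) ^ p ≤ 2 ^ p * (a ^ p + bb ^ p) := add_rpow_le p a bb hp ha0 hbb0
    have h4 : a ^ p = c₂ ^ p * Real.exp (p * (x - (max x 0) ^ 2 / (2 * σ ^ 2 * T))) := by
      rw [ha, Real.mul_rpow hc₂0 (Real.exp_pos _).le, ← Real.exp_mul, mul_comm _ p]
    have h5 : bb ^ p = cg ^ p *
        (Real.exp (-(dTwo σ r τ x) ^ 2 / 2 * p) / Real.sqrt (2 * Real.pi) ^ p) := by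
      rw [hbb, Real.mul_rpow hcg0 (by positivity),
        Real.div_rpow (Real.exp_pos _).le (Real.sqrt_nonneg _), ← Real.exp_mul]
    calc _ ≤ (a + bb) ^ p := h2
      _ ≤ 2 ^ p * (a ^ p + bb ^ p) := h3
      _ = M x := by rw [hM, h4, h5]
  -- integral bound
  have hIle : (∫ x : ℝ, |Real.exp (min x 0) * deriv (fun t => wPut σ r K t x) τ| ^ p)
      ≤ ∫ x : ℝ, M x :=
    integral_mono_of_nonneg
      (Filter.Eventually.of_forall fun x => Real.rpow_nonneg (abs_nonneg _) p)
      hMint (Filter.Eventually.of_forall hpoint)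
  have hIM : ∫ x : ℝ, M x = 2 ^ p * (c₂ ^ p * Bint)
      + 2 ^ p * (cg ^ p * (Real.sqrt (2 * σ ^ 2 * Real.pi / p) * Real.sqrt τ
        / Real.sqrt (2 * Real.pi) ^ p)) := by
    rw [hM, integral_const_mul, integral_add hMint1 hMint2, integral_const_mul,
      integral_const_mul, integral_div, integral_exp_dTwo σ r p τ hσ hτ hp0]
    rw [hBint]
    ring
  -- τ-power algebra for the Gaussian term
  have hcgτ : cg ^ p * Real.sqrt τ = (K * σ / 2) ^ p * τ ^ E := by
    have h1 : cg = (K * σ / 2) / Real.sqrt τ := by rw [hcg]; ring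
    have h2 : cg ^ p = (K * σ / 2) ^ p / Real.sqrt τ ^ p := by
      rw [h1, Real.div_rpow (by positivity) (Real.sqrt_nonneg _)]
    have h3 : Real.sqrt τ ^ p = τ ^ (p / 2) := by
      rw [Real.sqrt_eq_rpow, ← Real.rpow_mul hτ.le]
      congr 1
      ring
    have h4 : Real.sqrt τ = τ ^ ((1:ℝ)/2) := Real.sqrt_eq_rpow τ
    have h5 : τ ^ ((1:ℝ)/2) / τ ^ (p/2) = τ ^ E := by
      rw [← Real.rpow_sub hτ, hE]
    rw [h2, h3, h4]
    calc (K * σ / 2) ^ p / τ ^ (p/2) * τ ^ ((1:ℝ)/2)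
        = (K * σ / 2) ^ p * (τ ^ ((1:ℝ)/2) / τ ^ (p/2)) := by ring
      _ = (K * σ / 2) ^ p * τ ^ E := by rw [h5]
  have hTE : T ^ E ≤ τ ^ E := Real.rpow_le_rpow_of_nonpos hτ hτT hE0
  have hτE0 : 0 < τ ^ E := Real.rpow_pos_of_pos hτ E
  have hTmul : T ^ (-E) * T ^ E = 1 := by
    rw [← Real.rpow_add hT]; simp
  have htotal : (∫ x : ℝ, |Real.exp (min x 0) * deriv (fun t => wPut σ r K t x) τ| ^ p)
      ≤ Ct * τ ^ E := by
    have hpart1 : 2 ^ p * (c₂ ^ p * Bint) ≤ 2 ^ p * c₂ ^ p * Bint * T ^ (-E) * τ ^ E := by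
      have : 2 ^ p * (c₂ ^ p * Bint) = 2 ^ p * c₂ ^ p * Bint * T ^ (-E) * T ^ E := by
        rw [mul_assoc (2 ^ p * c₂ ^ p * Bint), hTmul]; ring
      rw [this]
      apply mul_le_mul_of_nonneg_left hTE
      positivity
    have hpart2 : 2 ^ p * (cg ^ p * (Real.sqrt (2 * σ ^ 2 * Real.pi / p) * Real.sqrt τ
        / Real.sqrt (2 * Real.pi) ^ p)) = 2 ^ p * C₂ * τ ^ E := by
      rw [hC₂]
      have : cg ^ p * (Real.sqrt (2 * σ ^ 2 * Real.pi / p) * Real.sqrt τ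
          / Real.sqrt (2 * Real.pi) ^ p)
          = (cg ^ p * Real.sqrt τ) * Real.sqrt (2 * σ ^ 2 * Real.pi / p)
            / Real.sqrt (2 * Real.pi) ^ p := by ring
      rw [this, hcgτ]
      ring
    calc (∫ x : ℝ, |Real.exp (min x 0) * deriv (fun t => wPut σ r K t x) τ| ^ p)
        ≤ ∫ x : ℝ, M x := hIle
      _ = 2 ^ p * (c₂ ^ p * Bint)
          + 2 ^ p * (cg ^ p * (Real.sqrt (2 * σ ^ 2 * Real.pi / p) * Real.sqrt τ
            / Real.sqrt (2 * Real.pi) ^ p)) := hIM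
      _ ≤ 2 ^ p * c₂ ^ p * Bint * T ^ (-E) * τ ^ E + 2 ^ p * C₂ * τ ^ E := by
          rw [← hpart2]; linarith
      _ = Ct * τ ^ E := by rw [hCt]; ring
  -- final rpow step
  have hLHS0 : 0 ≤ ∫ x : ℝ, |Real.exp (min x 0) * deriv (fun t => wPut σ r K t x) τ| ^ p :=
    integral_nonneg fun x => Real.rpow_nonneg (abs_nonneg _) p
  have hfin : (∫ x : ℝ, |Real.exp (min x 0) * deriv (fun t => wPut σ r K t x) τ| ^ p) ^ (1/p)
      ≤ (Ct * τ ^ E) ^ (1/p) :=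
    Real.rpow_le_rpow hLHS0 htotal (by positivity)
  have hsplit : (Ct * τ ^ E) ^ (1/p) = Ct ^ (1/p) * τ ^ (1 / (2*p) - 1/2) := by
    rw [Real.mul_rpow hCt0 hτE0.le, ← Real.rpow_mul hτ.le]
    congr 1
    rw [hE]
    field_simp
  rw [hsplit] at hfin
  have hτq0 : 0 < τ ^ (1 / (2*p) - 1/2) := Real.rpow_pos_of_pos hτ _
  calc (∫ x : ℝ, |Real.exp (min x 0) * deriv (fun t => wPut σ r K t x) τ| ^ p) ^ (1/p)
      ≤ Ct ^ (1/p) * τ ^ (1 / (2*p) - 1/2) := hfin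
    _ ≤ (Ct ^ (1/p) + 1) * τ ^ (1 / (2*p) - 1/2) := by
        apply mul_le_mul_of_nonneg_right _ hτq0.le
        linarith
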